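/- Let λ > 0, a > 2, ρ > 3/(4(a−1)), and let p_λ be the SCAD penalty with coordinatewise sum P_λ(x) = Σ_{j=1}^p p_λ(|x_j|). Let ψ*, ψ̂ ∈ ℝ^p, set ν = ψ̂ − ψ*, and let S ⊆ {1,…,p} with |S| = s. Suppose that (i) (ρ − 1/(2(a−1)))‖ν‖₂² ≤ P_λ(ψ*) − P_λ(ψ̂) + (λ/2)‖ν‖₁, and (ii) 3P_λ(ψ*) − P_λ(ψ̂) ≤ 3λ‖ν_S‖₁ − λ‖ν_{S^c}‖₁, where ν_S (resp. ν_{S^c}) equals ν on S (resp. on the complement of S) and is zero elsewhere. Then ‖ν‖₂ ≤ 6λ√s / (4ρ − 3/(a−1)). -/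

import Mathlib

/-- The SCAD penalty with regularization parameter `lam` and non-convexity parameter `a`. -/
noncomputable def scad (lam a t : ℝ) : ℝ :=
  if t ≤ lam then lam * t
  else if t ≤ a * lam then -(t ^ 2 - 2 * a * lam * t + lam ^ 2) / (2 * (a - 1))
  else (a + 1) * lam ^ 2 / 2

/-- Coordinatewise SCAD penalty `P_λ(x) = Σ_j p_λ(|x_j|)`. -/
noncomputable def scadSum (lam a : ℝ) {p : ℕ} (x : Fin p → ℝ) : ℝ :=
  ∑ j, scad lam a |x j|

set_option maxHeartbeats 1000000 in
lemma scad_subadd {lam a : ℝ} (hlam : 0 < lam) (ha : 2 < a) {u v : ℝ}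
    (hu : 0 ≤ u) (hv : 0 ≤ v) : scad lam a (u + v) ≤ scad lam a u + scad lam a v := by
  have h1 : (0:ℝ) < a - 1 := by linarith
  have h2 : (0:ℝ) < 2 * (a - 1) := by linarith
  unfold scad
  split_ifs
  all_goals try linarith
  all_goals field_simp
  all_goals (first | rw [div_le_div_right h2] | rw [div_le_div_iff two_pos (show (0:ℝ) < 2*(a-1)*2 by nlinarith)] | rw [div_le_div_iff two_pos (show (0:ℝ) < 2*(2*(a-1)) by nlinarith)] | rw [div_le_iff h2] | rw [le_div_iff h2] | rw [le_div_iff (show (0:ℝ) < 2*(2*(a-1)) by nlinarith)] | rw [div_le_iff (show (0:ℝ) < 2*(2*(a-1)) by nlinarith)] | skip)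
  all_goals nlinarith [sq_nonneg (u + v - lam), sq_nonneg (u - lam), sq_nonneg (v - lam), mul_nonneg hu hv, mul_pos hlam h1, sq_nonneg lam]

set_option maxHeartbeats 1000000 in
lemma scad_mono {lam a : ℝ} (hlam : 0 < lam) (ha : 2 < a) {u v : ℝ}
    (hu : 0 ≤ u) (huv : u ≤ v) : scad lam a u ≤ scad lam a v := by
  have h1 : (0:ℝ) < a - 1 := by linarith
  have h2 : (0:ℝ) < 2 * (a - 1) := by linarith
  unfold scad
  split_ifs
  all_goals try linarith
  all_goals field_simp
  all_goals (first | rw [div_le_div_right h2] | rw [div_le_div_iff two_pos (show (0:ℝ) < 2*(a-1)*2 by nlinarith)] | rw [div_le_div_iff two_pos (show (0:ℝ) < 2*(2*(a-1)) by nlinarith)] | rw [div_le_iff h2] | rw [le_div_iff h2] | rw [le_div_iff (show (0:ℝ) < 2*(2*(a-1)) by nlinarith)] | rw [div_le_iff (show (0:ℝ) < 2*(2*(a-1)) by nlinarith)] | skip)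
  all_goals nlinarith [sq_nonneg (v - u), sq_nonneg (v - lam), sq_nonneg (u - lam), sq_nonneg (v - a*lam), sq_nonneg (u - a*lam), mul_pos hlam h1]

set_option maxHeartbeats 1000000 in
lemma scad_key {lam a : ℝ} (hlam : 0 < lam) (ha : 2 < a) {t : ℝ} (ht : 0 ≤ t) :
    lam * t ≤ scad lam a t + t ^ 2 / (2 * (a - 1)) := by
  have h1 : (0:ℝ) < a - 1 := by linarith
  have h2 : (0:ℝ) < 2 * (a - 1) := by linarith
  unfold scad
  split_ifs
  all_goals field_simp
  all_goals (first | rw [div_le_div_right h2] | rw [div_le_div_iff two_pos (show (0:ℝ) < 2*(a-1)*2 by nlinarith)] | rw [div_le_div_iff two_pos (show (0:ℝ) < 2*(2*(a-1)) by nlinarith)] | rw [div_le_iff h2] | rw [le_div_iff h2] | rw [le_div_iff (show (0:ℝ) < 2*(2*(a-1)) by nlinarith)] | rw [div_le_iff (show (0:ℝ) < 2*(2*(a-1)) by nlinarith)] | skip)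
  all_goals nlinarith [sq_nonneg (t - lam), sq_nonneg (t - (a-1)*lam), sq_nonneg (t - a*lam), mul_pos hlam h1]

lemma scad_nonneg {lam a : ℝ} (hlam : 0 < lam) (ha : 2 < a) {t : ℝ} (ht : 0 ≤ t) :
    0 ≤ scad lam a t := by
  have h0 : scad lam a 0 = 0 := by unfold scad; rw [if_pos hlam.le]; ring
  have := scad_mono hlam ha le_rfl ht
  rwa [h0] at this

/-- Deterministic concluding step of the main rate theorem: under the RSC-type
  inequality (i) and the support decomposition inequality (ii), any stationary
  point satisfies `‖ν‖₂ ≤ 6λ√s / (4ρ − 3/(a−1))`. -/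
theorem scad_rate_conclusion (lam a ρ : ℝ) (hlam : 0 < lam) (ha : 2 < a)
    (hρ : 3 / (4 * (a - 1)) < ρ)
    (p : ℕ) (ψstar ψhat : Fin p → ℝ) (S : Finset (Fin p)) (s : ℕ) (hs : S.card = s)
    (hi : (ρ - 1 / (2 * (a - 1))) * (∑ j, (ψhat j - ψstar j) ^ 2) ≤
      scadSum lam a ψstar - scadSum lam a ψhat +
        lam / 2 * ∑ j, |ψhat j - ψstar j|)
    (hii : 3 * scadSum lam a ψstar - scadSum lam a ψhat ≤
      3 * lam * (∑ j, |if j ∈ S then ψhat j - ψstar j else 0|) -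
        lam * (∑ j, |if j ∈ S then 0 else ψhat j - ψstar j|)) :
    Real.sqrt (∑ j, (ψhat j - ψstar j) ^ 2) ≤
      6 * lam * Real.sqrt s / (4 * ρ - 3 / (a - 1)) := by
  have h1 : (0:ℝ) < a - 1 := by linarith
  set ν : Fin p → ℝ := fun j => ψhat j - ψstar j with hν
  set T : ℝ := ∑ j, ν j ^ 2 with hTdef
  have hT : 0 ≤ T := Finset.sum_nonneg fun j _ => sq_nonneg _
  set N : ℝ := Real.sqrt T with hNdef
  have hN2 : N ^ 2 = T := Real.sq_sqrt hT
  have hNnn : 0 ≤ N := Real.sqrt_nonneg _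
  -- sum of scad at ν bounded by sums at ψhat, ψstar
  have hPν : (∑ j, scad lam a |ν j|) ≤ scadSum lam a ψhat + scadSum lam a ψstar := by
    rw [scadSum, scadSum, ← Finset.sum_add_distrib]
    refine Finset.sum_le_sum fun j _ => ?_
    calc scad lam a |ν j| ≤ scad lam a (|ψhat j| + |ψstar j|) :=
          scad_mono hlam ha (abs_nonneg _) (abs_sub _ _)
      _ ≤ scad lam a |ψhat j| + scad lam a |ψstar j| :=
          scad_subadd hlam ha (abs_nonneg _) (abs_nonneg _)
  -- key bound
  have hkey : lam * (∑ j, |ν j|) ≤ (∑ j, scad lam a |ν j|) + T / (2 * (a - 1)) := by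
    rw [Finset.mul_sum, hTdef, Finset.sum_div, ← Finset.sum_add_distrib]
    refine Finset.sum_le_sum fun j _ => ?_
    have := scad_key hlam ha (t := |ν j|) (abs_nonneg _)
    rwa [sq_abs] at this
  -- nonnegativity of the complement term
  have hLSc : 0 ≤ lam * (∑ j, |if j ∈ S then 0 else ν j|) :=
    mul_nonneg hlam.le (Finset.sum_nonneg fun j _ => abs_nonneg _)
  set LS : ℝ := ∑ j, |if j ∈ S then ν j else 0| with hLSdef
  have hmain : (4 * ρ - 3 / (a - 1)) * T ≤ 6 * (lam * LS) := by
    have hne : a - 1 ≠ 0 := ne_of_gt h1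
    have e' : (ρ - 1 / (2 * (a - 1))) * T = ρ * T - T * (1/(a-1)) / 2 := by field_simp
    rw [e'] at hi
    have e2 : T / (2 * (a - 1)) = T * (1/(a-1)) / 2 := by rw [mul_one_div, div_div, mul_comm (a-1) 2]
    rw [e2] at hkey
    have eg : (4 * ρ - 3 / (a - 1)) * T = 4 * (ρ * T) - 3 * (T * (1/(a-1))) := by field_simp
    rw [eg]
    linarith [hi, hkey, hPν, hii, hLSc]
  -- Cauchy–Schwarz : LS ≤ sqrt s * N
  have hLS1 : LS = ∑ j ∈ S, |ν j| := by
    rw [hLSdef]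
    rw [show (∑ j, |if j ∈ S then ν j else 0|) = ∑ j, if j ∈ S then |ν j| else 0 by
      refine Finset.sum_congr rfl fun j _ => ?_
      split_ifs <;> simp]
    rw [Finset.sum_ite_mem, Finset.univ_inter]
  have hLSnn : 0 ≤ LS := Finset.sum_nonneg fun j _ => abs_nonneg _
  have hCS : LS ^ 2 ≤ s * T := by
    have h := Finset.sum_mul_sq_le_sq_mul_sq S (fun _ => (1:ℝ)) (fun j => |ν j|)
    simp only [one_mul, one_pow, Finset.sum_const, nsmul_eq_mul, mul_one] at h
    have hsub : (∑ j ∈ S, |ν j| ^ 2) ≤ T := by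
      rw [hTdef]
      refine Finset.sum_le_sum_of_subset_of_nonneg (Finset.subset_univ S)
        (fun j _ _ => sq_nonneg _) |>.trans_eq ?_
      exact Finset.sum_congr rfl fun j _ => by rw [sq_abs]
    calc LS ^ 2 = (∑ j ∈ S, |ν j|) ^ 2 := by rw [hLS1]
      _ ≤ (S.card : ℝ) * ∑ j ∈ S, |ν j| ^ 2 := h
      _ ≤ s * T := by
          rw [hs]
          exact mul_le_mul_of_nonneg_left hsub (Nat.cast_nonneg s)
  have hLS2 : LS ≤ Real.sqrt s * N := by
    have : LS = Real.sqrt (LS ^ 2) := (Real.sqrt_sq hLSnn).symm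
    rw [this, hNdef, ← Real.sqrt_mul (Nat.cast_nonneg s)]
    exact Real.sqrt_le_sqrt hCS
  -- conclude
  have hc : 0 < 4 * ρ - 3 / (a - 1) := by
    have : 3 / (a - 1) = 4 * (3 / (4 * (a - 1))) := by field_simp
    rw [this]; linarith
  rcases eq_or_lt_of_le hNnn with h0 | hpos
  · rw [← h0]
    positivity
  · rw [le_div_iff₀ hc]
    have : (4 * ρ - 3 / (a - 1)) * N * N ≤ (6 * lam * Real.sqrt s) * N := by
      calc (4 * ρ - 3 / (a - 1)) * N * N = (4 * ρ - 3 / (a - 1)) * T := by rw [← hN2]; ring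
        _ ≤ 6 * (lam * LS) := hmain
        _ ≤ 6 * (lam * (Real.sqrt s * N)) := by
            have := mul_le_mul_of_nonneg_left hLS2 hlam.le
            linarith
        _ = (6 * lam * Real.sqrt s) * N := by ring
    exact le_of_mul_le_mul_right (by linarith) hpos
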